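/- Assume condition (6) holds and that c_Λ := inf over words v in F_n^+ of ( W_μ(e,v)^{-1} · liminf_{k→∞} [ W_μ(v, v^{k-1}) ]^{1/k} ) is strictly positive, where v^{k-1} denotes the word v concatenated with itself k−1 times. Then every non-zero element A of 𝔏_Λ has strictly positive spectral radius; in particular the spectrum of A is not equal to {0}. -/

import Mathlib

noncomputable section

/-- Auxiliary recursion for the weight function: `W(u, []) = 1` and, reading the word
`w = i_k ⋯ i_1` as the list `[i_k, …, i_1]`,
`W(u, i :: w) = λ_{i, w·u} · W(u, w)`, so that
`W(u, i_k⋯i_1) = λ_{i_1,u} · λ_{i_2, i_1 u} ⋯ λ_{i_k, i_{k-1}⋯i_1 u}`. -/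
def Waux {n : ℕ} (lam : Fin n → FreeMonoid (Fin n) → ℝ) (u : FreeMonoid (Fin n)) :
    List (Fin n) → ℝ
  | [] => 1
  | i :: w => lam i (FreeMonoid.ofList w * u) * Waux lam u w

/-- The weight function `W : F_n^+ × F_n^+ → ℝ` associated to the weights `λ_{i,w}`. -/
def Wfun {n : ℕ} (lam : Fin n → FreeMonoid (Fin n) → ℝ) (u w : FreeMonoid (Fin n)) : ℝ :=
  Waux lam u (FreeMonoid.toList w)

instance {n : ℕ} : DecidableEq (FreeMonoid (Fin n)) := Classical.decEq _

/-- `n`-variable Fock space `H_n = ℓ²(F_n^+)`. -/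
abbrev Hn (n : ℕ) : Type := lp (fun _ : FreeMonoid (Fin n) => ℂ) 2

/-- The standard orthonormal basis vector `ξ_w` of `H_n`. -/
def xi {n : ℕ} (w : FreeMonoid (Fin n)) : Hn n := lp.single 2 w 1

/-- The unital WOT-closed algebra generated by a tuple of bounded operators on `H_n`:
the closure, in the weak operator topology, of the unital subalgebra they generate. -/
def wotAlg {n : ℕ} (T : Fin n → (Hn n →L[ℂ] Hn n)) : Set (Hn n →L[ℂ] Hn n) :=
  (ContinuousLinearMapWOT.ofCLM :
    (Hn n →L[ℂ] Hn n) → ContinuousLinearMapWOT (RingHom.id ℂ) (Hn n) (Hn n)) ⁻¹'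
    (closure ((ContinuousLinearMapWOT.ofCLM :
    (Hn n →L[ℂ] Hn n) → ContinuousLinearMapWOT (RingHom.id ℂ) (Hn n) (Hn n)) ''
      (Algebra.adjoin ℂ (Set.range T) : Subalgebra ℂ (Hn n →L[ℂ] Hn n))))

/-- Auxiliary recursion for the right weight function: reading `w = i_1 ⋯ i_k` as the
list `[i_1, …, i_k]`, `W_μ(v, i :: w) = μ_{i,v} · W_μ(v·i, w)`, so that
`W_μ(v, i_1⋯i_k) = μ_{i_1,v} · μ_{i_2, v i_1} ⋯ μ_{i_k, v i_1⋯i_{k-1}}`. -/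
def WmuAux {n : ℕ} (mu : Fin n → FreeMonoid (Fin n) → ℝ) :
    FreeMonoid (Fin n) → List (Fin n) → ℝ
  | _, [] => 1
  | v, i :: w => mu i v * WmuAux mu (v * FreeMonoid.of i) w

/-- The right weight function `W_μ : F_n^+ × F_n^+ → ℝ`. -/
def WmuFun {n : ℕ} (mu : Fin n → FreeMonoid (Fin n) → ℝ) (v w : FreeMonoid (Fin n)) : ℝ :=
  WmuAux mu v (FreeMonoid.toList w)

/-- The right weights `μ_{i,w} = W(i,w) · W(e,w)⁻¹` coming from condition (6). -/
def muW {n : ℕ} (lam : Fin n → FreeMonoid (Fin n) → ℝ) :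
    Fin n → FreeMonoid (Fin n) → ℝ :=
  fun i w => Wfun lam (FreeMonoid.of i) w * (Wfun lam 1 w)⁻¹

namespace SpecAux

open Filter Topology
open scoped ENNReal

variable {n : ℕ}

/-! ### Positivity of the weight functions -/

lemma Waux_pos {lam : Fin n → FreeMonoid (Fin n) → ℝ} (hpos : ∀ i w, 0 < lam i w)
    (u : FreeMonoid (Fin n)) : ∀ l : List (Fin n), 0 < Waux lam u l
  | [] => one_pos
  | i :: l => mul_pos (hpos _ _) (Waux_pos hpos u l)

lemma Wfun_pos {lam : Fin n → FreeMonoid (Fin n) → ℝ} (hpos : ∀ i w, 0 < lam i w)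
    (u w : FreeMonoid (Fin n)) : 0 < Wfun lam u w := Waux_pos hpos u _

lemma muW_pos {lam : Fin n → FreeMonoid (Fin n) → ℝ} (hpos : ∀ i w, 0 < lam i w)
    (i : Fin n) (w : FreeMonoid (Fin n)) : 0 < muW lam i w :=
  mul_pos (Wfun_pos hpos _ _) (inv_pos.mpr (Wfun_pos hpos _ _))

lemma WmuAux_pos {mu : Fin n → FreeMonoid (Fin n) → ℝ} (hpos : ∀ i w, 0 < mu i w) :
    ∀ (l : List (Fin n)) (v : FreeMonoid (Fin n)), 0 < WmuAux mu v l
  | [], _ => one_pos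
  | i :: l, v => mul_pos (hpos _ _) (WmuAux_pos hpos l _)

lemma WmuFun_pos {mu : Fin n → FreeMonoid (Fin n) → ℝ} (hpos : ∀ i w, 0 < mu i w)
    (v w : FreeMonoid (Fin n)) : 0 < WmuFun mu v w := WmuAux_pos hpos _ _

lemma WmuAux_append {mu : Fin n → FreeMonoid (Fin n) → ℝ} :
    ∀ (l₁ l₂ : List (Fin n)) (v : FreeMonoid (Fin n)),
      WmuAux mu v (l₁ ++ l₂) = WmuAux mu v l₁ * WmuAux mu (v * FreeMonoid.ofList l₁) l₂
  | [], l₂, v => by simp [WmuAux, FreeMonoid.ofList_nil]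
  | i :: l₁, l₂, v => by
      have ih := WmuAux_append (mu := mu) l₁ l₂ (v * FreeMonoid.of i)
      simp only [List.cons_append, WmuAux, List.append_eq] at ih ⊢
      rw [ih]
      simp [FreeMonoid.ofList_cons, mul_assoc]

lemma WmuFun_mul {mu : Fin n → FreeMonoid (Fin n) → ℝ} (v u₁ u₂ : FreeMonoid (Fin n)) :
    WmuFun mu v (u₁ * u₂) = WmuFun mu v u₁ * WmuFun mu (v * u₁) u₂ :=
  WmuAux_append u₁.toList u₂.toList v

lemma Wfun_cons {lam : Fin n → FreeMonoid (Fin n) → ℝ} (j : Fin n)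
    (u w : FreeMonoid (Fin n)) :
    Wfun lam u (FreeMonoid.of j * w) = lam j (w * u) * Wfun lam u w := rfl

lemma muW_swap {lam : Fin n → FreeMonoid (Fin n) → ℝ} (hpos : ∀ i w, 0 < lam i w)
    (i j : Fin n) (w : FreeMonoid (Fin n)) :
    lam j w * muW lam i (FreeMonoid.of j * w) = lam j (w * FreeMonoid.of i) * muW lam i w := by
  unfold muW
  rw [Wfun_cons, Wfun_cons, mul_one]
  have h1 : Wfun lam 1 w ≠ 0 := (Wfun_pos hpos _ _).ne'
  have h2 : lam j w ≠ 0 := (hpos _ _).ne'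
  field_simp

end SpecAux

namespace SpecAux

open scoped ENNReal

set_option synthInstance.maxHeartbeats 1000000
set_option maxHeartbeats 1000000

variable {n : ℕ}

lemma xi_apply (w x : FreeMonoid (Fin n)) : (xi w : Hn n) x = if x = w then 1 else 0 := by
  by_cases h : x = w
  · subst h; simp [xi, lp.single_apply_self]
  · simp [xi, lp.single_apply_ne 2 w _ h, h]

lemma norm_xi (w : FreeMonoid (Fin n)) : ‖(xi w : Hn n)‖ = 1 := by
  simpa [xi] using lp.norm_single (p := 2) (E := fun _ : FreeMonoid (Fin n) => ℂ)
    (by norm_num) w (1 : ℂ)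

lemma hasSum_basis (f : Hn n) : HasSum (fun w => (f w : ℂ) • (xi w : Hn n)) f := by
  have h := lp.hasSum_single (E := fun _ : FreeMonoid (Fin n) => ℂ) (p := 2) (by norm_num) f
  have he : ∀ w, (f w : ℂ) • (xi w : Hn n) = lp.single 2 w (f w) := fun w => by
    rw [xi, ← lp.single_smul, smul_eq_mul, mul_one]
  simpa only [he] using h

lemma clm_zero_of_basis {B : Hn n →L[ℂ] Hn n} (h : ∀ w, B (xi w) = 0) : B = 0 := by
  refine ContinuousLinearMap.ext fun f => ?_
  have h1 := (hasSum_basis f).mapL B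
  simp only [map_smul, h, smul_zero] at h1
  simpa using h1.unique hasSum_zero

/-- The coordinate functional on `H_n`. -/
def coordL (x : FreeMonoid (Fin n)) : Hn n →L[ℂ] ℂ :=
  LinearMap.mkContinuous
    { toFun := fun f => f x
      map_add' := fun f g => congrFun (lp.coeFn_add f g) x
      map_smul' := fun c f => congrFun (lp.coeFn_smul c f) x }
    1 (fun f => by simpa using lp.norm_apply_le_norm (by norm_num : (2 : ℝ≥0∞) ≠ 0) f x)

@[simp] lemma coordL_apply (x : FreeMonoid (Fin n)) (f : Hn n) : coordL x f = f x := rfl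

lemma coord_tsum (B : Hn n →L[ℂ] Hn n) (f : Hn n) (x : FreeMonoid (Fin n)) :
    (B f) x = ∑' w, (f w : ℂ) * (B (xi w)) x := by
  have h1 := ((hasSum_basis f).mapL B).mapL (coordL x)
  simp only [map_smul, coordL_apply, smul_eq_mul] at h1
  exact h1.tsum_eq.symm

end SpecAux

namespace SpecAux

open scoped ENNReal

set_option synthInstance.maxHeartbeats 1000000
set_option maxHeartbeats 1000000

variable {n : ℕ} (mu : Fin n → FreeMonoid (Fin n) → ℝ)

open scoped Classical in
/-- Underlying function of the right weighted shift `R_i`. -/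
def Rfun (i : Fin n) (f : Hn n) (x : FreeMonoid (Fin n)) : ℂ :=
  if h : ∃ w : FreeMonoid (Fin n), w * FreeMonoid.of i = x then
    (mu i h.choose : ℂ) * f h.choose else 0

lemma Rfun_mul (i : Fin n) (f : Hn n) (w : FreeMonoid (Fin n)) :
    Rfun mu i f (w * FreeMonoid.of i) = (mu i w : ℂ) * f w := by
  have h : ∃ w' : FreeMonoid (Fin n), w' * FreeMonoid.of i = w * FreeMonoid.of i := ⟨w, rfl⟩
  rw [Rfun, dif_pos h]
  have hw : h.choose = w := mul_right_cancel h.choose_spec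
  rw [hw]

lemma Rfun_ne (i : Fin n) (f : Hn n) (x : FreeMonoid (Fin n))
    (hx : ∀ w, w * FreeMonoid.of i ≠ x) : Rfun mu i f x = 0 := by
  rw [Rfun, dif_neg]
  rintro ⟨w, hw⟩
  exact hx w hw

lemma Rfun_memℓp {C : ℝ} (hC : ∀ i w, |mu i w| ≤ C) (hC0 : 0 ≤ C) (i : Fin n) (f : Hn n) :
    Memℓp (Rfun mu i f) 2 := by
  apply memℓp_gen
  have hinj : Function.Injective (fun w : FreeMonoid (Fin n) => w * FreeMonoid.of i) :=
    fun a b hab => mul_right_cancel hab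
  have hvan : ∀ x ∉ Set.range (fun w : FreeMonoid (Fin n) => w * FreeMonoid.of i),
      ‖Rfun mu i f x‖ ^ (2 : ℝ≥0∞).toReal = 0 := by
    intro x hx
    rw [Rfun_ne mu i f x (fun w hw => hx ⟨w, hw⟩), norm_zero,
      Real.zero_rpow (by norm_num)]
  rw [← Function.Injective.summable_iff hinj hvan]
  have hsum : Summable fun w : FreeMonoid (Fin n) =>
      C ^ (2 : ℝ≥0∞).toReal * ‖f w‖ ^ (2 : ℝ≥0∞).toReal :=
    ((lp.memℓp f).summable (by norm_num)).mul_left _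
  refine hsum.of_nonneg_of_le
    (fun w => by
      simp only [Function.comp_apply]
      exact Real.rpow_nonneg (norm_nonneg _) _)
    fun w => ?_
  simp only [Function.comp_apply]
  have h1 : ‖Rfun mu i f (w * FreeMonoid.of i)‖ ≤ C * ‖f w‖ := by
    rw [Rfun_mul, norm_mul, Complex.norm_real, Real.norm_eq_abs]
    exact mul_le_mul_of_nonneg_right (hC i w) (norm_nonneg _)
  calc ‖Rfun mu i f (w * FreeMonoid.of i)‖ ^ (2 : ℝ≥0∞).toReal
      ≤ (C * ‖f w‖) ^ (2 : ℝ≥0∞).toReal :=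
        Real.rpow_le_rpow (norm_nonneg _) h1 (by norm_num)
    _ = C ^ (2 : ℝ≥0∞).toReal * ‖f w‖ ^ (2 : ℝ≥0∞).toReal :=
        Real.mul_rpow hC0 (norm_nonneg _)

lemma Rfun_norm_le {C : ℝ} (hC : ∀ i w, |mu i w| ≤ C) (hC0 : 0 ≤ C) (i : Fin n) (f : Hn n) :
    ‖(⟨Rfun mu i f, Rfun_memℓp mu hC hC0 i f⟩ : Hn n)‖ ≤ C * ‖f‖ := by
  apply lp.norm_le_of_tsum_le (by norm_num) (mul_nonneg hC0 (norm_nonneg f))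
  have hinj : Function.Injective (fun w : FreeMonoid (Fin n) => w * FreeMonoid.of i) :=
    fun a b hab => mul_right_cancel hab
  have hvan : Function.support
      (fun x => ‖Rfun mu i f x‖ ^ (2 : ℝ≥0∞).toReal) ⊆
      Set.range (fun w : FreeMonoid (Fin n) => w * FreeMonoid.of i) := by
    intro x hx
    by_contra hcon
    apply hx
    show ‖Rfun mu i f x‖ ^ (2 : ℝ≥0∞).toReal = 0
    rw [Rfun_ne mu i f x (fun w hw => hcon ⟨w, hw⟩), norm_zero,
      Real.zero_rpow (by norm_num)]
  have hcoe : ∀ x, ((⟨Rfun mu i f, Rfun_memℓp mu hC hC0 i f⟩ : Hn n) : _ → ℂ) x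
      = Rfun mu i f x := fun x => rfl
  simp only [hcoe]
  rw [← Function.Injective.tsum_eq hinj hvan]
  have hle : ∀ w : FreeMonoid (Fin n),
      ‖Rfun mu i f (w * FreeMonoid.of i)‖ ^ (2 : ℝ≥0∞).toReal ≤
        C ^ (2 : ℝ≥0∞).toReal * ‖f w‖ ^ (2 : ℝ≥0∞).toReal := by
    intro w
    have h1 : ‖Rfun mu i f (w * FreeMonoid.of i)‖ ≤ C * ‖f w‖ := by
      rw [Rfun_mul, norm_mul, Complex.norm_real, Real.norm_eq_abs]
      exact mul_le_mul_of_nonneg_right (hC i w) (norm_nonneg _)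
    calc ‖Rfun mu i f (w * FreeMonoid.of i)‖ ^ (2 : ℝ≥0∞).toReal
        ≤ (C * ‖f w‖) ^ (2 : ℝ≥0∞).toReal :=
          Real.rpow_le_rpow (norm_nonneg _) h1 (by norm_num)
      _ = C ^ (2 : ℝ≥0∞).toReal * ‖f w‖ ^ (2 : ℝ≥0∞).toReal :=
          Real.mul_rpow hC0 (norm_nonneg _)
  have hsummable : Summable fun w : FreeMonoid (Fin n) =>
      ‖Rfun mu i f (w * FreeMonoid.of i)‖ ^ (2 : ℝ≥0∞).toReal := by
    refine (((lp.memℓp f).summable (by norm_num)).mul_left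
      (C ^ (2 : ℝ≥0∞).toReal)).of_nonneg_of_le (fun w => by positivity) hle
  calc (∑' w : FreeMonoid (Fin n), ‖Rfun mu i f (w * FreeMonoid.of i)‖ ^ (2 : ℝ≥0∞).toReal)
      ≤ ∑' w : FreeMonoid (Fin n), C ^ (2 : ℝ≥0∞).toReal * ‖f w‖ ^ (2 : ℝ≥0∞).toReal :=
        Summable.tsum_le_tsum hle hsummable (((lp.memℓp f).summable (by norm_num)).mul_left _)
    _ = C ^ (2 : ℝ≥0∞).toReal * ∑' w, ‖f w‖ ^ (2 : ℝ≥0∞).toReal := tsum_mul_left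
    _ = C ^ (2 : ℝ≥0∞).toReal * ‖f‖ ^ (2 : ℝ≥0∞).toReal := by
        rw [← lp.norm_rpow_eq_tsum (by norm_num) f]
    _ = (C * ‖f‖) ^ (2 : ℝ≥0∞).toReal := (Real.mul_rpow hC0 (norm_nonneg _)).symm

/-- The right weighted shift `R_i` as a bounded operator. -/
def Rop {C : ℝ} (hC : ∀ i w, |mu i w| ≤ C) (hC0 : 0 ≤ C) (i : Fin n) : Hn n →L[ℂ] Hn n :=
  LinearMap.mkContinuous
    { toFun := fun f => (⟨Rfun mu i f, Rfun_memℓp mu hC hC0 i f⟩ : Hn n)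
      map_add' := fun f g => by
        apply lp.ext
        funext x
        have hco : ∀ (u v : Hn n) (y : FreeMonoid (Fin n)),
            ((u + v : Hn n) : _ → ℂ) y = u y + v y := fun u v y =>
          congrFun (lp.coeFn_add u v) y
        rw [hco]
        show Rfun mu i (f + g) x = Rfun mu i f x + Rfun mu i g x
        by_cases h : ∃ w : FreeMonoid (Fin n), w * FreeMonoid.of i = x
        · rw [Rfun, Rfun, Rfun, dif_pos h, dif_pos h, dif_pos h]
          rw [hco f g]
          ring
        · rw [Rfun, Rfun, Rfun, dif_neg h, dif_neg h, dif_neg h, add_zero]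
      map_smul' := fun c f => by
        apply lp.ext
        funext x
        simp only [RingHom.id_apply]
        have hco : ∀ (u : Hn n) (y : FreeMonoid (Fin n)),
            ((c • u : Hn n) : _ → ℂ) y = c * u y := fun u y =>
          congrFun (lp.coeFn_smul c u) y
        rw [hco]
        show Rfun mu i (c • f) x = c * Rfun mu i f x
        by_cases h : ∃ w : FreeMonoid (Fin n), w * FreeMonoid.of i = x
        · rw [Rfun, Rfun, dif_pos h, dif_pos h, hco f]
          ring
        · rw [Rfun, Rfun, dif_neg h, dif_neg h, mul_zero] }
    C (fun f => Rfun_norm_le mu hC hC0 i f)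

lemma Rop_coe {C : ℝ} (hC : ∀ i w, |mu i w| ≤ C) (hC0 : 0 ≤ C) (i : Fin n) (f : Hn n) :
    ((Rop mu hC hC0 i f : Hn n) : FreeMonoid (Fin n) → ℂ) = Rfun mu i f := rfl

lemma Rop_xi {C : ℝ} (hC : ∀ i w, |mu i w| ≤ C) (hC0 : 0 ≤ C) (i : Fin n)
    (w : FreeMonoid (Fin n)) :
    Rop mu hC hC0 i (xi w) = (mu i w : ℂ) • xi (w * FreeMonoid.of i) := by
  apply lp.ext
  funext x
  rw [Rop_coe]
  have hco : ((((mu i w : ℂ) • xi (w * FreeMonoid.of i)) : Hn n) : _ → ℂ) x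
      = (mu i w : ℂ) * (xi (w * FreeMonoid.of i) : Hn n) x := by
    rw [lp.coeFn_smul]; rfl
  rw [hco]
  by_cases hx : ∃ w' : FreeMonoid (Fin n), w' * FreeMonoid.of i = x
  · obtain ⟨w', rfl⟩ := hx
    rw [Rfun_mul, xi_apply, xi_apply]
    by_cases hw : w' = w
    · subst hw; simp
    · rw [if_neg hw, if_neg (fun hcon => hw (mul_right_cancel hcon)), mul_zero, mul_zero]
  · rw [Rfun_ne mu i _ x (fun w' hw' => hx ⟨w', hw'⟩), xi_apply,
      if_neg (fun hcon => hx ⟨w, hcon.symm⟩), mul_zero]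

/-- Composition of right shifts along a word. -/
def Rword (Rs : Fin n → (Hn n →L[ℂ] Hn n)) : List (Fin n) → (Hn n →L[ℂ] Hn n)
  | [] => 1
  | i :: t => Rword Rs t * Rs i

lemma Rword_coord {C : ℝ} (hC : ∀ i w, |mu i w| ≤ C) (hC0 : 0 ≤ C) :
    ∀ (l : List (Fin n)) (g : Hn n) (w : FreeMonoid (Fin n)),
      (Rword (Rop mu hC hC0) l g) (w * FreeMonoid.ofList l) = (WmuAux mu w l : ℂ) * g w
  | [], g, w => by
      simp [Rword, WmuAux, FreeMonoid.ofList_nil]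
  | i :: t, g, w => by
      have h1 : w * FreeMonoid.ofList (i :: t)
          = (w * FreeMonoid.of i) * FreeMonoid.ofList t := by
        rw [FreeMonoid.ofList_cons, mul_assoc]
      show ((Rword (Rop mu hC hC0) t * Rop mu hC hC0 i) g) (w * FreeMonoid.ofList (i :: t)) = _
      rw [ContinuousLinearMap.mul_apply, h1,
        Rword_coord hC hC0 t (Rop mu hC hC0 i g) (w * FreeMonoid.of i)]
      have h2 : ((Rop mu hC hC0 i g : Hn n) : _ → ℂ) (w * FreeMonoid.of i)
          = (mu i w : ℂ) * g w := by rw [Rop_coe, Rfun_mul]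
      rw [h2]
      show _ = ((mu i w * WmuAux mu (w * FreeMonoid.of i) t : ℝ) : ℂ) * g w
      push_cast
      ring

lemma Rword_coord_ne {C : ℝ} (hC : ∀ i w, |mu i w| ≤ C) (hC0 : 0 ≤ C) :
    ∀ (l : List (Fin n)) (g : Hn n) (x : FreeMonoid (Fin n)),
      (∀ w, w * FreeMonoid.ofList l ≠ x) → (Rword (Rop mu hC hC0) l g) x = 0
  | [], g, x, hx => absurd (mul_one x) (hx x)
  | i :: t, g, x, hx => by
      show ((Rword (Rop mu hC hC0) t * Rop mu hC hC0 i) g) x = 0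
      rw [ContinuousLinearMap.mul_apply]
      by_cases hdec : ∃ w' : FreeMonoid (Fin n), w' * FreeMonoid.ofList t = x
      · obtain ⟨w', rfl⟩ := hdec
        rw [Rword_coord mu hC hC0 t _ w']
        have h2 : ((Rop mu hC hC0 i g : Hn n) : _ → ℂ) w' = 0 := by
          rw [Rop_coe]
          exact Rfun_ne mu i g w' (fun w hw => hx w
            (by rw [FreeMonoid.ofList_cons, ← mul_assoc, hw]))
        rw [h2, mul_zero]
      · exact Rword_coord_ne hC hC0 t _ x (fun w hw => hdec ⟨w, hw⟩)

lemma Rword_xi {C : ℝ} (hC : ∀ i w, |mu i w| ≤ C) (hC0 : 0 ≤ C)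
    (l : List (Fin n)) (w : FreeMonoid (Fin n)) :
    Rword (Rop mu hC hC0) l (xi w)
      = (WmuAux mu w l : ℂ) • xi (w * FreeMonoid.ofList l) := by
  induction l generalizing w with
  | nil => simp [Rword, WmuAux, FreeMonoid.ofList_nil]
  | cons i t ih =>
      show (Rword (Rop mu hC hC0) t * Rop mu hC hC0 i) (xi w) = _
      rw [ContinuousLinearMap.mul_apply, Rop_xi, map_smul, ih (w * FreeMonoid.of i)]
      rw [smul_smul]
      congr 1
      · show (mu i w : ℂ) * (WmuAux mu (w * FreeMonoid.of i) t : ℂ)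
            = ((mu i w * WmuAux mu (w * FreeMonoid.of i) t : ℝ) : ℂ)
        push_cast
        ring
      · rw [FreeMonoid.ofList_cons, mul_assoc]

end SpecAux

namespace SpecAux

open Filter Topology
open scoped ENNReal

set_option synthInstance.maxHeartbeats 1000000
set_option maxHeartbeats 1000000

variable {n : ℕ}

lemma comm_of_wotAlg {T : Fin n → (Hn n →L[ℂ] Hn n)} {A : Hn n →L[ℂ] Hn n}
    (hA : A ∈ wotAlg T) (R : Hn n →L[ℂ] Hn n) (hcomm : ∀ j, T j * R = R * T j) :
    A * R = R * A := by
  set S : Set ((Hn n) →WOT[ℂ] (Hn n)) :=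
    {B | ∀ (x : Hn n) (y : Hn n →L[ℂ] ℂ), y (B (R x)) = (y.comp R) (B x)} with hS
  have hclosed : IsClosed S := by
    have hSeq : S = ⋂ (x : Hn n), ⋂ (y : Hn n →L[ℂ] ℂ),
        {B : (Hn n) →WOT[ℂ] (Hn n) | y (B (R x)) = (y.comp R) (B x)} := by
      ext B
      simp [hS, Set.mem_iInter]
    rw [hSeq]
    refine isClosed_iInter fun x => isClosed_iInter fun y => ?_
    exact isClosed_eq (ContinuousLinearMapWOT.continuous_dual_apply (R x) y)
      (ContinuousLinearMapWOT.continuous_dual_apply x (y.comp R))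
  have himg : (ContinuousLinearMapWOT.ofCLM :
    (Hn n →L[ℂ] Hn n) → ContinuousLinearMapWOT (RingHom.id ℂ) (Hn n) (Hn n)) ''
      (Algebra.adjoin ℂ (Set.range T) : Subalgebra ℂ (Hn n →L[ℂ] Hn n)) ⊆ S := by
    rintro _ ⟨P, hP, rfl⟩
    have hPR : P * R = R * P := by
      induction hP using Algebra.adjoin_induction with
      | mem x hx =>
          obtain ⟨j, rfl⟩ := hx
          exact hcomm j
      | algebraMap r => exact (Algebra.commutes r R).symm ▸ Algebra.commutes r R
      | add x y hx hy ihx ihy => rw [add_mul, mul_add, ihx, ihy]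
      | mul x y hx hy ihx ihy => rw [mul_assoc, ihy, ← mul_assoc, ihx, mul_assoc]
    intro x y
    have hpt := DFunLike.congr_fun hPR x
    rw [ContinuousLinearMap.mul_apply, ContinuousLinearMap.mul_apply] at hpt
    simp only [ContinuousLinearMap.toWOT_apply, ContinuousLinearMap.comp_apply]
    rw [hpt]
  have hmem : (ContinuousLinearMapWOT.ofCLM :
    (Hn n →L[ℂ] Hn n) → ContinuousLinearMapWOT (RingHom.id ℂ) (Hn n) (Hn n)) A ∈ S :=
    closure_minimal himg hclosed hA
  refine ContinuousLinearMap.ext fun x => ?_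
  have h1 : ∀ y : Hn n →L[ℂ] ℂ, y ((A * R) x) = y ((R * A) x) := by
    intro y
    have h2 := hmem x y
    simp only [ContinuousLinearMap.toWOT_apply, ContinuousLinearMap.comp_apply] at h2
    simpa [ContinuousLinearMap.mul_apply] using h2
  by_contra hne
  obtain ⟨y, hy⟩ := SeparatingDual.exists_separating_of_ne (R := ℂ) hne
  exact hy (h1 y)

lemma mul_liminf_le (c : ℝ≥0∞) (f : ℕ → ℝ≥0∞) :
    c * liminf f atTop ≤ liminf (fun k => c * f k) atTop := by
  rw [Filter.liminf_eq, Filter.liminf_eq, ENNReal.mul_sSup]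
  refine iSup₂_le fun x hx => ?_
  exact le_sSup (hx.mono fun k hk => mul_le_mul_right hk c)

lemma length_pow (v : FreeMonoid (Fin n)) (k : ℕ) : (v ^ k).length = k * v.length := by
  induction k with
  | zero => simp
  | succ k ih => rw [pow_succ, FreeMonoid.length_mul, ih]; ring

end SpecAux

open Filter Topology
open scoped ENNReal

set_option synthInstance.maxHeartbeats 1000000
set_option maxHeartbeats 2000000

/-- Assume condition (6) holds and that
`c_Λ = inf_v ( W_μ(e,v)⁻¹ · liminf_k [W_μ(v, v^{k-1})]^{1/k} )` is strictly positive.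
Then every non-zero `A ∈ 𝔏_Λ` has strictly positive spectral radius; in particular
the spectrum of `A` is not `{0}`. -/
theorem LLambda_positive_spectral_radius (n : ℕ) (hn : 2 ≤ n)
    (lam : Fin n → FreeMonoid (Fin n) → ℝ)
    (hpos : ∀ i w, 0 < lam i w) (hbdd : ∃ C : ℝ, ∀ i w, lam i w ≤ C)
    (h6 : ∃ C : ℝ, ∀ i w, Wfun lam (FreeMonoid.of i) w * (Wfun lam 1 w)⁻¹ ≤ C)
    (hc : 0 < ⨅ v : FreeMonoid (Fin n),
      (ENNReal.ofReal (WmuFun (muW lam) 1 v))⁻¹ *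
        Filter.liminf
          (fun k : ℕ => ENNReal.ofReal (WmuFun (muW lam) v (v ^ (k - 1))) ^ ((1 : ℝ) / k))
          Filter.atTop)
    (T : Fin n → (Hn n →L[ℂ] Hn n))
    (hT : ∀ i w, T i (xi w) = (lam i w : ℂ) • xi (FreeMonoid.of i * w))
    (A : Hn n →L[ℂ] Hn n) (hA : A ∈ wotAlg T) (hA0 : A ≠ 0) :
    0 < spectralRadius ℂ A ∧ spectrum ℂ A ≠ {0} := by
  classical
  obtain ⟨C₀, hC₀⟩ := h6
  set mu : Fin n → FreeMonoid (Fin n) → ℝ := muW lam with hmu_def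
  have hmupos : ∀ i w, 0 < mu i w := fun i w => SpecAux.muW_pos hpos i w
  have hC : ∀ i w, |mu i w| ≤ C₀ := fun i w => by
    rw [abs_of_pos (hmupos i w)]; exact hC₀ i w
  have hC0 : (0 : ℝ) ≤ C₀ :=
    le_trans (hmupos ⟨0, by omega⟩ 1).le (le_trans (le_abs_self _) (hC ⟨0, by omega⟩ 1))
  set R : Fin n → (Hn n →L[ℂ] Hn n) := SpecAux.Rop mu hC hC0 with hR_def
  -- T and R commute
  have hTR : ∀ j i, T j * R i = R i * T j := by
    intro j i
    have hzero : T j * R i - R i * T j = 0 := by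
      apply SpecAux.clm_zero_of_basis
      intro w
      rw [ContinuousLinearMap.sub_apply, ContinuousLinearMap.mul_apply,
        ContinuousLinearMap.mul_apply, hR_def, SpecAux.Rop_xi, map_smul, hT, hT, map_smul,
        SpecAux.Rop_xi, smul_smul, smul_smul]
      have hword : FreeMonoid.of j * w * FreeMonoid.of i
          = FreeMonoid.of j * (w * FreeMonoid.of i) := mul_assoc _ _ _
      rw [hword]
      have hsc : (mu i w : ℂ) * (lam j (w * FreeMonoid.of i) : ℂ)
          = (lam j w : ℂ) * (mu i (FreeMonoid.of j * w) : ℂ) := by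
        have hswap := SpecAux.muW_swap hpos i j w
        rw [hmu_def]
        have hcast : ((lam j w * muW lam i (FreeMonoid.of j * w) : ℝ) : ℂ)
            = ((lam j (w * FreeMonoid.of i) * muW lam i w : ℝ) : ℂ) := by
          exact_mod_cast congrArg Complex.ofReal hswap
        push_cast at hcast ⊢
        linear_combination -hcast
      rw [hsc, sub_self]
    have := sub_eq_zero.mp hzero
    exact this
  have hAR : ∀ i, A * R i = R i * A := fun i =>
    SpecAux.comm_of_wotAlg hA (R i) (fun j => hTR j i)
  have hARw : ∀ l : List (Fin n), A * SpecAux.Rword R l = SpecAux.Rword R l * A := by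
    intro l
    induction l with
    | nil => show A * 1 = 1 * A; rw [mul_one, one_mul]
    | cons i t ih =>
        show A * (SpecAux.Rword R t * R i) = SpecAux.Rword R t * R i * A
        rw [← mul_assoc, ih, mul_assoc, hAR i, ← mul_assoc]
  -- Fourier coefficients of A
  set a : FreeMonoid (Fin n) → ℂ := fun w => (A (xi 1)) w with ha_def
  have hAxi : ∀ u : FreeMonoid (Fin n),
      A (xi u) = ((WmuFun mu 1 u : ℝ) : ℂ)⁻¹ • (SpecAux.Rword R u.toList (A (xi 1))) := by
    intro u
    have h1 : SpecAux.Rword R u.toList (xi 1) = ((WmuFun mu 1 u : ℝ) : ℂ) • xi u := by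
      have h2 := SpecAux.Rword_xi mu hC hC0 u.toList 1
      rw [one_mul, FreeMonoid.ofList_toList] at h2
      exact h2
    have hne : ((WmuFun mu 1 u : ℝ) : ℂ) ≠ 0 := by
      exact_mod_cast (SpecAux.WmuFun_pos hmupos 1 u).ne'
    have h2 : xi u = ((WmuFun mu 1 u : ℝ) : ℂ)⁻¹ • SpecAux.Rword R u.toList (xi 1) := by
      rw [h1, smul_smul, inv_mul_cancel₀ hne, one_smul]
    rw [h2, map_smul]
    congr 1
    have h3 := DFunLike.congr_fun (hARw u.toList) (xi 1)
    rw [ContinuousLinearMap.mul_apply, ContinuousLinearMap.mul_apply] at h3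
    exact h3
  have hAco_mul : ∀ u w : FreeMonoid (Fin n),
      (A (xi u)) (w * u) = ((WmuFun mu 1 u : ℝ) : ℂ)⁻¹ * ((WmuFun mu w u : ℝ) : ℂ) * a w := by
    intro u w
    rw [hAxi u]
    have hco : ∀ (c : ℂ) (g : Hn n) (y : FreeMonoid (Fin n)),
        ((c • g : Hn n) : _ → ℂ) y = c * g y := fun c g y =>
      congrFun (lp.coeFn_smul c g) y
    rw [hco]
    have h1 := SpecAux.Rword_coord mu hC hC0 u.toList (A (xi 1)) w
    rw [FreeMonoid.ofList_toList] at h1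
    rw [h1, ← mul_assoc]
    rfl
  have hAco_ne : ∀ u x : FreeMonoid (Fin n),
      (∀ w, w * u ≠ x) → (A (xi u)) x = 0 := by
    intro u x hx
    rw [hAxi u]
    have hco : ∀ (c : ℂ) (g : Hn n) (y : FreeMonoid (Fin n)),
        ((c • g : Hn n) : _ → ℂ) y = c * g y := fun c g y =>
      congrFun (lp.coeFn_smul c g) y
    rw [hco]
    rw [SpecAux.Rword_coord_ne mu hC hC0 u.toList (A (xi 1)) x
      (by
        intro w hw
        rw [FreeMonoid.ofList_toList] at hw
        exact hx w hw), mul_zero]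
  -- existence of a non-zero Fourier coefficient
  have ha_ex : ∃ w, a w ≠ 0 := by
    by_contra hcon
    push_neg at hcon
    have hz : A (xi (1 : FreeMonoid (Fin n))) = 0 := by
      apply lp.ext
      funext w
      have : (A (xi (1 : FreeMonoid (Fin n)))) w = 0 := hcon w
      simpa using this
    have hAzero : A = 0 := by
      apply SpecAux.clm_zero_of_basis
      intro w
      rw [hAxi w, hz, map_zero, smul_zero]
    exact hA0 hAzero
  -- minimal degree
  have hPex : ∃ m : ℕ, ∃ w : FreeMonoid (Fin n), w.length = m ∧ a w ≠ 0 := by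
    obtain ⟨w, hw⟩ := ha_ex
    exact ⟨w.length, w, rfl, hw⟩
  set d := Nat.find hPex with hd_def
  obtain ⟨v, hvlen, hav⟩ := Nat.find_spec hPex
  have hmin : ∀ w : FreeMonoid (Fin n), w.length < d → a w = 0 := by
    intro w hw
    by_contra hcon
    exact Nat.find_min hPex hw ⟨w, rfl, hcon⟩
  have hlenpow : ∀ k : ℕ, (v ^ k).length = k * d := by
    intro k
    rw [SpecAux.length_pow, hvlen]
  -- the diagonal coefficients
  set β : ℝ := WmuFun mu 1 v with hβ_def
  have hβpos : 0 < β := SpecAux.WmuFun_pos hmupos 1 v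
  set cv : ℕ → ℂ := fun k => (a v) ^ k * (((β ^ (k - 1))⁻¹ : ℝ) : ℂ) *
    ((WmuFun mu v (v ^ (k - 1)) : ℝ) : ℂ) with hcv_def
  have hrec : ∀ k : ℕ, cv (k + 1) = cv k * a v *
      (((WmuFun mu 1 (v ^ k) : ℝ))⁻¹ : ℂ) * ((WmuFun mu v (v ^ k) : ℝ) : ℂ) := by
    intro k
    cases k with
    | zero =>
        norm_num [hcv_def, WmuFun, WmuAux, FreeMonoid.toList_one]
    | succ m =>
        have hvpow : v ^ (m + 1) = v * v ^ m := pow_succ' v m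
        have hsplit : WmuFun mu 1 (v ^ (m + 1)) = β * WmuFun mu v (v ^ m) := by
          rw [hβ_def, hvpow, SpecAux.WmuFun_mul, one_mul]
        have hβne : ((β : ℝ) : ℂ) ≠ 0 := by exact_mod_cast hβpos.ne'
        have hγne : ((WmuFun mu v (v ^ m) : ℝ) : ℂ) ≠ 0 := by
          exact_mod_cast (SpecAux.WmuFun_pos hmupos v (v ^ m)).ne'
        simp only [hcv_def, Nat.add_sub_cancel]
        rw [hsplit]
        push_cast
        field_simp
        ring
  have main : ∀ k : ℕ,
      (∀ x : FreeMonoid (Fin n), x.length < k * d → ((A ^ k) (xi 1)) x = 0) ∧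
        ((A ^ k) (xi 1)) (v ^ k) = cv k := by
    intro k
    induction k with
    | zero =>
        constructor
        · intro x hx
          simp at hx
        · have h1 : (A ^ 0) (xi (1 : FreeMonoid (Fin n))) = xi 1 := by
            rw [pow_zero, ContinuousLinearMap.one_apply]
          rw [h1, pow_zero, SpecAux.xi_apply, if_pos rfl]
          norm_num [hcv_def, WmuFun, WmuAux, FreeMonoid.toList_one]
    | succ k ih =>
        obtain ⟨ihsupp, ihval⟩ := ih
        have hstep : ∀ x : FreeMonoid (Fin n),
            ((A ^ (k + 1)) (xi 1)) x = ∑' u, ((A ^ k) (xi 1)) u * (A (xi u)) x := by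
          intro x
          rw [pow_succ', ContinuousLinearMap.mul_apply]
          exact SpecAux.coord_tsum A ((A ^ k) (xi 1)) x
        have hsucc_mul : (k + 1) * d = k * d + d := by ring
        constructor
        · intro x hx
          rw [hstep x]
          have hzero : ∀ u : FreeMonoid (Fin n), ((A ^ k) (xi 1)) u * (A (xi u)) x = 0 := by
            intro u
            by_cases hu : ((A ^ k) (xi 1)) u = 0
            · rw [hu, zero_mul]
            · have hulen : k * d ≤ u.length := not_lt.mp (fun hcon => hu (ihsupp u hcon))
              by_cases hdec : ∃ w, w * u = x
              · obtain ⟨w, rfl⟩ := hdec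
                have hwlen : w.length < d := by
                  have hl : (w * u).length = w.length + u.length := FreeMonoid.length_mul w u
                  rw [hsucc_mul] at hx
                  omega
                rw [hAco_mul u w, hmin w hwlen, mul_zero, mul_zero]
              · rw [hAco_ne u x (fun w hw => hdec ⟨w, hw⟩), mul_zero]
          calc (∑' u, ((A ^ k) (xi 1)) u * (A (xi u)) x) = ∑' _u : FreeMonoid (Fin n), (0 : ℂ) :=
                tsum_congr hzero
            _ = 0 := tsum_zero
        · rw [hstep (v ^ (k + 1))]
          rw [tsum_eq_single (v ^ k) ?_]
          · rw [ihval]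
            have h2 : (A (xi (v ^ k))) (v ^ (k + 1)) = (A (xi (v ^ k))) (v * v ^ k) := by
              rw [← pow_succ']
            rw [h2, hAco_mul (v ^ k) v, hrec k]
            push_cast
            ring
          · intro u hu
            by_cases hu0 : ((A ^ k) (xi 1)) u = 0
            · rw [hu0, zero_mul]
            · have hulen : k * d ≤ u.length := not_lt.mp (fun hcon => hu0 (ihsupp u hcon))
              by_cases hdec : ∃ w, w * u = v ^ (k + 1)
              · obtain ⟨w, hw⟩ := hdec
                have hlen : w.length + u.length = (k + 1) * d := by
                  have h3 := congrArg FreeMonoid.length hw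
                  rw [FreeMonoid.length_mul] at h3
                  rw [h3, hlenpow]
                by_cases hwd : w.length < d
                · rw [← hw, hAco_mul u w, hmin w hwd, mul_zero, mul_zero]
                · have hul : u.length = k * d := by omega
                  have hwl : w.length = d := by omega
                  exfalso
                  have hw2 : w.toList ++ u.toList = v.toList ++ (v ^ k).toList := by
                    have h4 := congrArg FreeMonoid.toList (hw.trans (pow_succ' v k))
                    rw [FreeMonoid.toList_mul, FreeMonoid.toList_mul] at h4
                    exact h4
                  have hlw : w.toList.length = v.toList.length := by
                    have : v.toList.length = v.length := rfl
                    have h5 : w.toList.length = w.length := rfl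
                    rw [h5, this, hwl, hvlen]
                  obtain ⟨hwv, huv⟩ := List.append_inj hw2 hlw
                  apply hu
                  rw [← FreeMonoid.ofList_toList u, huv, FreeMonoid.ofList_toList]
              · rw [hAco_ne u _ (fun w hw => hdec ⟨w, hw⟩), mul_zero]
  -- norm lower bound
  have hnorm : ∀ k : ℕ, ‖cv k‖ ≤ ‖A ^ k‖ := by
    intro k
    calc ‖cv k‖ = ‖((A ^ k) (xi 1)) (v ^ k)‖ := by rw [(main k).2]
      _ ≤ ‖(A ^ k) (xi 1)‖ := lp.norm_apply_le_norm (by norm_num) _ _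
      _ ≤ ‖A ^ k‖ * ‖xi (1 : FreeMonoid (Fin n))‖ := ContinuousLinearMap.le_opNorm _ _
      _ = ‖A ^ k‖ := by rw [SpecAux.norm_xi, mul_one]
  -- ENNReal endgame
  have htend := spectrum.pow_nnnorm_pow_one_div_tendsto_nhds_spectralRadius A
  set L := spectralRadius ℂ A with hL_def
  have hLlim : liminf (fun k : ℕ => ((‖A ^ k‖₊ : ℝ≥0∞) ^ ((1 : ℝ) / k))) atTop = L :=
    htend.liminf_eq
  have hsk_le : ∀ k : ℕ,
      (ENNReal.ofReal ‖cv k‖) ^ ((1 : ℝ) / k) ≤ ((‖A ^ k‖₊ : ℝ≥0∞)) ^ ((1 : ℝ) / k) := by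
    intro k
    refine ENNReal.rpow_le_rpow ?_ (by positivity)
    rw [← enorm_eq_nnnorm, ← ofReal_norm]
    exact ENNReal.ofReal_le_ofReal (hnorm k)
  have hL1 : liminf (fun k : ℕ => (ENNReal.ofReal ‖cv k‖) ^ ((1 : ℝ) / k)) atTop ≤ L := by
    rw [← hLlim]
    exact liminf_le_liminf (Eventually.of_forall hsk_le)
  set α : ℝ≥0∞ := ENNReal.ofReal ‖a v‖ with hα_def
  set b : ℝ≥0∞ := ENNReal.ofReal β with hb_def
  have hα0 : α ≠ 0 := (ENNReal.ofReal_pos.mpr (norm_pos_iff.mpr hav)).ne'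
  have hb0 : b ≠ 0 := (ENNReal.ofReal_pos.mpr hβpos).ne'
  have hbtop : b ≠ ⊤ := ENNReal.ofReal_ne_top
  have hlow : ∀ k : ℕ, 1 ≤ k →
      α * (max b 1)⁻¹ * (ENNReal.ofReal (WmuFun mu v (v ^ (k - 1))) ^ ((1 : ℝ) / k))
        ≤ (ENNReal.ofReal ‖cv k‖) ^ ((1 : ℝ) / k) := by
    intro k hk
    have hkne : (k : ℝ) ≠ 0 := Nat.cast_ne_zero.mpr (by omega)
    have hγpos : 0 < WmuFun mu v (v ^ (k - 1)) := SpecAux.WmuFun_pos hmupos _ _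
    have hnormcv : ‖cv k‖ = ‖a v‖ ^ k * (β ^ (k - 1))⁻¹ * WmuFun mu v (v ^ (k - 1)) := by
      rw [hcv_def]
      rw [norm_mul, norm_mul, norm_pow, Complex.norm_real, Complex.norm_real,
        Real.norm_eq_abs, Real.norm_eq_abs,
        abs_of_nonneg (inv_nonneg.mpr (pow_nonneg hβpos.le _)), abs_of_pos hγpos]
    rw [hnormcv]
    rw [ENNReal.ofReal_mul (by positivity), ENNReal.ofReal_mul (by positivity)]
    rw [ENNReal.mul_rpow_of_ne_top
        (ENNReal.mul_ne_top ENNReal.ofReal_ne_top ENNReal.ofReal_ne_top)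
        ENNReal.ofReal_ne_top,
      ENNReal.mul_rpow_of_ne_top ENNReal.ofReal_ne_top ENNReal.ofReal_ne_top]
    refine mul_le_mul' (mul_le_mul' ?_ ?_) le_rfl
    · have h1 : ENNReal.ofReal (‖a v‖ ^ k) = α ^ k := by
        rw [hα_def, ENNReal.ofReal_pow (norm_nonneg _)]
      rw [h1, ← ENNReal.rpow_natCast α k, ← ENNReal.rpow_mul, mul_one_div,
        div_self hkne, ENNReal.rpow_one]
    · have h2 : ENNReal.ofReal ((β ^ (k - 1))⁻¹) = (b ^ (k - 1))⁻¹ := by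
        rw [ENNReal.ofReal_inv_of_pos (pow_pos hβpos _), hb_def,
          ENNReal.ofReal_pow hβpos.le]
      rw [h2, ENNReal.inv_rpow]
      refine ENNReal.inv_le_inv' ?_
      rw [← ENNReal.rpow_natCast b (k - 1), ← ENNReal.rpow_mul]
      rcases le_total b 1 with hble | hbge
      · refine le_trans ?_ (le_max_right b 1)
        calc b ^ ((((k - 1 : ℕ) : ℝ)) * (1 / (k : ℝ))) ≤ b ^ (0 : ℝ) :=
              ENNReal.rpow_le_rpow_of_exponent_ge hble (by positivity)
          _ = 1 := ENNReal.rpow_zero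
      · refine le_trans ?_ (le_max_left b 1)
        calc b ^ ((((k - 1 : ℕ) : ℝ)) * (1 / (k : ℝ))) ≤ b ^ (1 : ℝ) := by
              refine ENNReal.rpow_le_rpow_of_exponent_le hbge ?_
              rw [mul_one_div]
              refine div_le_one_of_le₀ ?_ (by positivity)
              exact_mod_cast Nat.sub_le k 1
          _ = b := ENNReal.rpow_one b
  set G : ℕ → ℝ≥0∞ := fun k => ENNReal.ofReal (WmuFun mu v (v ^ (k - 1))) ^ ((1 : ℝ) / k)
    with hG_def
  have hKG : α * (max b 1)⁻¹ * liminf G atTop ≤ L := by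
    refine le_trans (SpecAux.mul_liminf_le _ G) (le_trans ?_ hL1)
    refine liminf_le_liminf ?_
    filter_upwards [eventually_ge_atTop 1] with k hk
    exact hlow k hk
  have hmax : (max b 1)⁻¹ = b⁻¹ * min 1 b := by
    rcases le_total b 1 with h | h
    · rw [max_eq_right h, min_eq_right h, inv_one, ENNReal.inv_mul_cancel hb0 hbtop]
    · rw [max_eq_left h, min_eq_left h, mul_one]
  have hIle : (⨅ v' : FreeMonoid (Fin n),
      (ENNReal.ofReal (WmuFun mu 1 v'))⁻¹ *
        liminf (fun k : ℕ =>
          ENNReal.ofReal (WmuFun mu v' (v' ^ (k - 1))) ^ ((1 : ℝ) / k)) atTop)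
        ≤ b⁻¹ * liminf G atTop := by
    refine le_trans (iInf_le _ v) ?_
    apply le_of_eq
    rw [hG_def, hb_def, hβ_def]
  have hminpos : min 1 b ≠ 0 := (lt_min zero_lt_one (ENNReal.ofReal_pos.mpr hβpos)).ne'
  have hLpos : 0 < L := by
    have h1 : (0 : ℝ≥0∞) < α * min 1 b := ENNReal.mul_pos hα0 hminpos
    have h2 : (0 : ℝ≥0∞) < (α * min 1 b) * (⨅ v' : FreeMonoid (Fin n),
        (ENNReal.ofReal (WmuFun mu 1 v'))⁻¹ *
          liminf (fun k : ℕ =>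
            ENNReal.ofReal (WmuFun mu v' (v' ^ (k - 1))) ^ ((1 : ℝ) / k)) atTop) :=
      ENNReal.mul_pos h1.ne' hc.ne'
    refine lt_of_lt_of_le h2 ?_
    calc (α * min 1 b) * (⨅ v' : FreeMonoid (Fin n),
        (ENNReal.ofReal (WmuFun mu 1 v'))⁻¹ *
          liminf (fun k : ℕ =>
            ENNReal.ofReal (WmuFun mu v' (v' ^ (k - 1))) ^ ((1 : ℝ) / k)) atTop)
        ≤ (α * min 1 b) * (b⁻¹ * liminf G atTop) := mul_le_mul_right hIle _
      _ = α * (max b 1)⁻¹ * liminf G atTop := by rw [hmax]; ring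
      _ ≤ L := hKG
  refine ⟨hLpos, ?_⟩
  intro hspec
  have hzero : L = 0 := by
    rw [hL_def, spectralRadius, hspec]
    simp
  exact hLpos.ne' hzero
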